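/- Equip $M(n,\mathbb{C})\cong\mathfrak{gl}(n)^*$ (via the trace form) with its Lie–Poisson bracket, so that for the matrix-entry coordinate functions one has $\{x_{ij},x_{kl}\}=\delta_{jk}x_{il}-\delta_{li}x_{kj}$. Then for each $m\le n$ and $1\le k\le m$, the function $f_{m,k}(x)=\operatorname{tr}(x_m^k)$ (trace of the $k$-th power of the upper-left $m\times m$ block) satisfies: $\{f_{m,k},f_{m',k'}\}=0$ for all $m,m'\le n$ and all $k,k'$. -/

import Mathlib

attribute [local instance] Matrix.normedAddCommGroup Matrix.normedSpace

section GZaux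

open Matrix

variable {n m m' : ℕ}

/-! ### Auxiliary continuous linear maps -/

/-- Truncation to the upper-left `m × m` block, as a continuous linear map. -/
noncomputable def subCLM (hm : m ≤ n) :
    Matrix (Fin n) (Fin n) ℂ →L[ℂ] Matrix (Fin m) (Fin m) ℂ :=
  LinearMap.toContinuousLinearMap
    { toFun := fun y => y.submatrix (Fin.castLE hm) (Fin.castLE hm)
      map_add' := fun _ _ => rfl
      map_smul' := fun _ _ => rfl }

@[simp] lemma subCLM_apply (hm : m ≤ n) (y : Matrix (Fin n) (Fin n) ℂ) :
    subCLM hm y = y.submatrix (Fin.castLE hm) (Fin.castLE hm) := rfl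

noncomputable def lmulCLM (B : Matrix (Fin m) (Fin m) ℂ) :
    Matrix (Fin m) (Fin m) ℂ →L[ℂ] Matrix (Fin m) (Fin m) ℂ :=
  LinearMap.toContinuousLinearMap (LinearMap.mulLeft ℂ B)

noncomputable def rmulCLM (B : Matrix (Fin m) (Fin m) ℂ) :
    Matrix (Fin m) (Fin m) ℂ →L[ℂ] Matrix (Fin m) (Fin m) ℂ :=
  LinearMap.toContinuousLinearMap (LinearMap.mulRight ℂ B)

noncomputable def mulCLM2 :
    Matrix (Fin m) (Fin m) ℂ →L[ℂ] Matrix (Fin m) (Fin m) ℂ →L[ℂ] Matrix (Fin m) (Fin m) ℂ :=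
  LinearMap.toContinuousLinearMap
    { toFun := fun A => lmulCLM A
      map_add' := by intro A B; ext C i j; simp [lmulCLM, Matrix.add_mul]
      map_smul' := by intro c A; ext C i j; simp [lmulCLM, Matrix.smul_mul] }

lemma mulCLM2_apply (A B : Matrix (Fin m) (Fin m) ℂ) : mulCLM2 A B = A * B := rfl

noncomputable def trCLM (m : ℕ) : Matrix (Fin m) (Fin m) ℂ →L[ℂ] ℂ :=
  LinearMap.toContinuousLinearMap (Matrix.traceLinearMap (Fin m) ℂ ℂ)

@[simp] lemma trCLM_apply (A : Matrix (Fin m) (Fin m) ℂ) : trCLM m A = Matrix.trace A := rfl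

/-! ### Derivative of `y ↦ (y_m)^k` -/

lemma hasFDerivAt_mul {f g : Matrix (Fin n) (Fin n) ℂ → Matrix (Fin m) (Fin m) ℂ}
    {f' g' : Matrix (Fin n) (Fin n) ℂ →L[ℂ] Matrix (Fin m) (Fin m) ℂ}
    {x : Matrix (Fin n) (Fin n) ℂ}
    (hf : HasFDerivAt f f' x) (hg : HasFDerivAt g g' x) :
    HasFDerivAt (fun y => f y * g y)
      ((mulCLM2.isBoundedBilinearMap.deriv (f x, g x)).comp (f'.prod g')) x :=
  by have h := (mulCLM2.isBoundedBilinearMap.hasFDerivAt (f x, g x)).comp x (HasFDerivAt.prodMk hf hg); exact h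

/-- Candidate derivative CLM of `y ↦ (y_m)^k`. -/
noncomputable def powD (hm : m ≤ n) (x : Matrix (Fin n) (Fin n) ℂ) (k : ℕ) :
    Matrix (Fin n) (Fin n) ℂ →L[ℂ] Matrix (Fin m) (Fin m) ℂ :=
  ∑ i ∈ Finset.range k,
    (lmulCLM ((x.submatrix (Fin.castLE hm) (Fin.castLE hm)) ^ i)).comp
      ((rmulCLM ((x.submatrix (Fin.castLE hm) (Fin.castLE hm)) ^ (k - 1 - i))).comp (subCLM hm))

lemma powD_apply (hm : m ≤ n) (x H : Matrix (Fin n) (Fin n) ℂ) (k : ℕ) :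
    powD hm x k H = ∑ i ∈ Finset.range k,
      (x.submatrix (Fin.castLE hm) (Fin.castLE hm)) ^ i *
        (H.submatrix (Fin.castLE hm) (Fin.castLE hm)) *
        (x.submatrix (Fin.castLE hm) (Fin.castLE hm)) ^ (k - 1 - i) := by
  simp [powD, lmulCLM, rmulCLM, mul_assoc]

lemma hasFDerivAt_subpow (hm : m ≤ n) (x : Matrix (Fin n) (Fin n) ℂ) (k : ℕ) :
    HasFDerivAt (fun y => (y.submatrix (Fin.castLE hm) (Fin.castLE hm)) ^ k)
      (powD hm x k) x := by
  induction k with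
  | zero =>
    simp only [pow_zero]
    have : powD hm x 0 = 0 := by simp [powD]
    rw [this]
    exact hasFDerivAt_const _ _
  | succ k ih =>
    have hsub : HasFDerivAt (fun y : Matrix (Fin n) (Fin n) ℂ =>
        y.submatrix (Fin.castLE hm) (Fin.castLE hm)) (subCLM hm) x :=
      (subCLM hm).hasFDerivAt
    have h := hasFDerivAt_mul (n := n) ih hsub
    simp only [← pow_succ] at h
    refine HasFDerivAt.congr_fderiv h (Eq.symm ?_)
    refine ContinuousLinearMap.ext fun H => ?_
    change powD hm x (k + 1) H = (x.submatrix (Fin.castLE hm) (Fin.castLE hm)) ^ k * subCLM hm H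
      + powD hm x k H * x.submatrix (Fin.castLE hm) (Fin.castLE hm)
    simp only [ContinuousLinearMap.prod_apply, mulCLM2_apply, subCLM_apply]
    rw [powD_apply, powD_apply, Finset.sum_range_succ, Finset.sum_mul]
    rw [add_comm]
    congr 1
    · simp
    · apply Finset.sum_congr rfl
      intro i hi
      rw [Finset.mem_range] at hi
      have h2 : k - 1 - i + 1 = k - i := by omega
      conv_rhs => rw [mul_assoc, ← pow_succ, h2]
      norm_num

/-! ### Padding of a small matrix by zeros -/

/-- Pad an `m × m` matrix to an `n × n` matrix with zeros. -/
def padE (hm : m ≤ n) (B : Matrix (Fin m) (Fin m) ℂ) : Matrix (Fin n) (Fin n) ℂ :=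
  Matrix.of fun a b =>
    if h : (a : ℕ) < m ∧ (b : ℕ) < m then B ⟨a, h.1⟩ ⟨b, h.2⟩ else 0

lemma sum_extend (hm : m ≤ n) (f : Fin n → ℂ) (hf : ∀ b : Fin n, m ≤ (b : ℕ) → f b = 0) :
    ∑ b, f b = ∑ a : Fin m, f (Fin.castLE hm a) := by
  symm
  have : ∑ a : Fin m, f (Fin.castLE hm a)
      = ∑ b ∈ Finset.univ.map (Fin.castLEEmb hm), f b := by
    rw [Finset.sum_map]; rfl
  rw [this]
  apply Finset.sum_subset (Finset.subset_univ _)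
  intro b _ hb
  apply hf
  by_contra hlt
  push_neg at hlt
  exact hb (Finset.mem_map.mpr ⟨⟨(b : ℕ), hlt⟩, Finset.mem_univ _, by ext; rfl⟩)

lemma padE_apply_lt (hm : m ≤ n) (B : Matrix (Fin m) (Fin m) ℂ) (a b : Fin n)
    (ha : (a : ℕ) < m) (hb : (b : ℕ) < m) : padE hm B a b = B ⟨a, ha⟩ ⟨b, hb⟩ := by
  simp [padE, ha, hb]

lemma padE_apply_castLE (hm : m ≤ n) (B : Matrix (Fin m) (Fin m) ℂ) (a b : Fin m) :
    padE hm B (Fin.castLE hm a) (Fin.castLE hm b) = B a b := by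
  rw [padE_apply_lt hm B _ _ (by simpa using a.2) (by simpa using b.2)]
  rfl

lemma padE_apply_left (hm : m ≤ n) (B : Matrix (Fin m) (Fin m) ℂ) (a b : Fin n)
    (ha : m ≤ (a : ℕ)) : padE hm B a b = 0 := by
  simp only [padE, Matrix.of_apply]
  rw [dif_neg]; omega

lemma padE_apply_right (hm : m ≤ n) (B : Matrix (Fin m) (Fin m) ℂ) (a b : Fin n)
    (hb : m ≤ (b : ℕ)) : padE hm B a b = 0 := by
  simp only [padE, Matrix.of_apply]
  rw [dif_neg]; omega

lemma padE_mul (hm : m ≤ n) (U V : Matrix (Fin m) (Fin m) ℂ) :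
    padE hm U * padE hm V = padE hm (U * V) := by
  ext a b
  rw [Matrix.mul_apply]
  by_cases ha : (a : ℕ) < m
  · by_cases hb : (b : ℕ) < m
    · rw [padE_apply_lt hm _ a b ha hb, Matrix.mul_apply]
      rw [sum_extend hm _ (fun c hc => by rw [padE_apply_right hm _ _ _ hc, zero_mul])]
      apply Finset.sum_congr rfl
      intro c _
      rw [padE_apply_lt hm U a _ ha (by simpa using c.2),
        padE_apply_lt hm V _ b (by simpa using c.2) hb]
      rfl
    · rw [padE_apply_right hm _ a b (le_of_not_gt hb)]
      apply Finset.sum_eq_zero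
      intro c _
      rw [padE_apply_right hm _ _ _ (le_of_not_gt hb), mul_zero]
  · rw [padE_apply_left hm _ a b (le_of_not_gt ha)]
    apply Finset.sum_eq_zero
    intro c _
    rw [padE_apply_left hm _ _ _ (le_of_not_gt ha), zero_mul]

lemma trace_padE (hm : m ≤ n) (U : Matrix (Fin m) (Fin m) ℂ) :
    Matrix.trace (padE hm U) = Matrix.trace U := by
  simp only [Matrix.trace, Matrix.diag_apply]
  rw [sum_extend hm _ (fun b hb => padE_apply_left hm _ _ _ hb)]
  exact Finset.sum_congr rfl fun a _ => padE_apply_castLE hm U a a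

lemma padE_mul_x_mul_padE (hm : m ≤ n) (U V : Matrix (Fin m) (Fin m) ℂ)
    (x : Matrix (Fin n) (Fin n) ℂ) :
    padE hm U * x * padE hm V
      = padE hm (U * x.submatrix (Fin.castLE hm) (Fin.castLE hm) * V) := by
  ext a b
  rw [Matrix.mul_apply]
  by_cases ha : (a : ℕ) < m
  · by_cases hb : (b : ℕ) < m
    · rw [padE_apply_lt hm _ a b ha hb]
      rw [sum_extend hm _ (fun d hd => by rw [padE_apply_left hm _ _ _ hd, mul_zero])]
      rw [Matrix.mul_apply]
      apply Finset.sum_congr rfl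
      intro d _
      rw [padE_apply_lt hm V _ b (by simpa using d.2) hb]
      show _ * V d _ = _
      congr 1
      rw [Matrix.mul_apply, Matrix.mul_apply]
      rw [sum_extend hm _ (fun c hc => by rw [padE_apply_right hm _ _ _ hc, zero_mul])]
      apply Finset.sum_congr rfl
      intro c _
      rw [padE_apply_lt hm U a _ ha (by simpa using c.2)]
      rfl
    · rw [padE_apply_right hm _ a b (le_of_not_gt hb)]
      exact Finset.sum_eq_zero fun d _ =>
        by rw [padE_apply_right hm V _ _ (le_of_not_gt hb), mul_zero]
  · rw [padE_apply_left hm _ a b (le_of_not_gt ha)]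
    refine Finset.sum_eq_zero fun d _ => ?_
    have : (padE hm U * x) a d = 0 := by
      rw [Matrix.mul_apply]
      exact Finset.sum_eq_zero fun c _ =>
        by rw [padE_apply_left hm _ _ _ (le_of_not_gt ha), zero_mul]
    rw [this, zero_mul]

lemma trace_padE_mul_x (hm : m ≤ n) (W : Matrix (Fin m) (Fin m) ℂ)
    (x : Matrix (Fin n) (Fin n) ℂ) :
    Matrix.trace (padE hm W * x)
      = Matrix.trace (W * x.submatrix (Fin.castLE hm) (Fin.castLE hm)) := by
  simp only [Matrix.trace, Matrix.diag_apply]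
  rw [sum_extend hm _ (fun a hA => by
    rw [Matrix.mul_apply]
    exact Finset.sum_eq_zero fun c _ =>
      by rw [padE_apply_left hm _ _ _ hA, zero_mul])]
  apply Finset.sum_congr rfl
  intro a _
  rw [Matrix.mul_apply, Matrix.mul_apply]
  rw [sum_extend hm _ (fun c hc => by rw [padE_apply_right hm _ _ _ hc, zero_mul])]
  apply Finset.sum_congr rfl
  intro c _
  rw [padE_apply_castLE]
  rfl

lemma padE_padE (hmm' : m ≤ m') (hm' : m' ≤ n) (U : Matrix (Fin m) (Fin m) ℂ) :
    padE hm' (padE hmm' U) = padE (hmm'.trans hm') U := by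
  ext a b
  by_cases ha : (a : ℕ) < m
  · by_cases hb : (b : ℕ) < m
    · rw [padE_apply_lt (hmm'.trans hm') U a b ha hb,
        padE_apply_lt hm' _ a b (by omega) (by omega), padE_apply_lt]
    · rw [padE_apply_right (hmm'.trans hm') U a b (le_of_not_gt hb)]
      by_cases hb' : (b : ℕ) < m'
      · rw [padE_apply_lt hm' _ a b (by omega) hb']
        exact padE_apply_right hmm' U _ _ (le_of_not_gt hb)
      · rw [padE_apply_right hm' _ a b (le_of_not_gt hb')]
  · rw [padE_apply_left (hmm'.trans hm') U a b (le_of_not_gt ha)]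
    by_cases ha' : (a : ℕ) < m'
    · by_cases hb' : (b : ℕ) < m'
      · rw [padE_apply_lt hm' _ a b ha' hb']
        exact padE_apply_left hmm' U _ _ (le_of_not_gt ha)
      · rw [padE_apply_right hm' _ a b (le_of_not_gt hb')]
    · rw [padE_apply_left hm' _ a b (le_of_not_gt ha')]

/-! ### The derivative of the Gelfand–Zeitlin functions -/

lemma trace_mul_stdBasis (hm : m ≤ n) (C : Matrix (Fin m) (Fin m) ℂ) (i j : Fin n) :
    Matrix.trace (C * ((Matrix.single i j (1 : ℂ)).submatrix
        (Fin.castLE hm) (Fin.castLE hm)))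
      = padE hm C j i := by
  simp only [Matrix.trace, Matrix.diag_apply, Matrix.mul_apply, Matrix.submatrix_apply,
    Matrix.single, Matrix.of_apply]
  by_cases hij : (j : ℕ) < m ∧ (i : ℕ) < m
  · obtain ⟨hj, hi⟩ := hij
    have key : ∀ a b : Fin m,
        (if i = Fin.castLE hm b ∧ j = Fin.castLE hm a then (1:ℂ) else 0)
          = (if b = ⟨(i:ℕ), hi⟩ then 1 else 0) * (if a = ⟨(j:ℕ), hj⟩ then 1 else 0) := by
      intro a b
      by_cases h1 : b = ⟨(i:ℕ), hi⟩ <;> by_cases h2 : a = ⟨(j:ℕ), hj⟩ <;>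
        simp_all [Fin.ext_iff] <;> omega
    simp only [key, padE, Matrix.of_apply, dif_pos (And.intro hj hi)]
    simp [Finset.mul_sum, mul_ite, Finset.sum_ite_eq']
  · have key : ∀ a b : Fin m,
        (if i = Fin.castLE hm b ∧ j = Fin.castLE hm a then (1:ℂ) else 0) = 0 := by
      intro a b
      rw [if_neg]
      rintro ⟨h1, h2⟩
      have e1 := congrArg Fin.val h1
      have e2 := congrArg Fin.val h2
      simp only [Fin.coe_castLE] at e1 e2
      have := a.2; have := b.2
      omega
    simp only [key, mul_zero, Finset.sum_const_zero, padE, Matrix.of_apply, dif_neg hij]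

lemma fderiv_GZ (hm : m ≤ n) (x : Matrix (Fin n) (Fin n) ℂ) (k : ℕ) (i j : Fin n) :
    fderiv ℂ (fun y => Matrix.trace ((y.submatrix (Fin.castLE hm) (Fin.castLE hm)) ^ k)) x
        (Matrix.single i j (1 : ℂ))
      = (k : ℂ) * padE hm ((x.submatrix (Fin.castLE hm) (Fin.castLE hm)) ^ (k - 1)) j i := by
  have htr : HasFDerivAt
      (fun y => Matrix.trace ((y.submatrix (Fin.castLE hm) (Fin.castLE hm)) ^ k))
      ((trCLM m).comp (powD hm x k)) x :=
    (trCLM m).hasFDerivAt.comp x (hasFDerivAt_subpow hm x k)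
  rw [htr.fderiv, ContinuousLinearMap.comp_apply, trCLM_apply, powD_apply]
  rw [Matrix.trace_sum]
  have hterm : ∀ t ∈ Finset.range k,
      Matrix.trace ((x.submatrix (Fin.castLE hm) (Fin.castLE hm)) ^ t *
        ((Matrix.single i j (1:ℂ)).submatrix (Fin.castLE hm) (Fin.castLE hm)) *
        (x.submatrix (Fin.castLE hm) (Fin.castLE hm)) ^ (k - 1 - t))
      = padE hm ((x.submatrix (Fin.castLE hm) (Fin.castLE hm)) ^ (k - 1)) j i := by
    intro t ht
    rw [Finset.mem_range] at ht
    have he : k - 1 - t + t = k - 1 := by omega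
    rw [Matrix.trace_mul_comm, ← mul_assoc, ← pow_add, he, trace_mul_stdBasis]
  rw [Finset.sum_congr rfl hterm, Finset.sum_const, Finset.card_range, nsmul_eq_mul]

/-! ### Evaluation of the quadruple sums -/

lemma S1_eq (P Q x : Matrix (Fin n) (Fin n) ℂ) (c d : ℂ) :
    ∑ i, ∑ j, ∑ k, ∑ l, (c * P j i) * (d * Q l k) * (if j = k then x i l else 0)
      = c * d * Matrix.trace (P * x * Q) := by
  have h1 : ∀ i j : Fin n,
      ∑ k, ∑ l, (c * P j i) * (d * Q l k) * (if j = k then x i l else 0)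
        = ∑ l, (c * P j i) * (d * Q l j) * x i l := by
    intro i j
    rw [Finset.sum_comm]
    apply Finset.sum_congr rfl
    intro l _
    simp [mul_ite, Finset.sum_ite_eq]
  simp only [h1]
  simp only [Matrix.trace, Matrix.diag_apply, Matrix.mul_apply, Finset.mul_sum,
    Finset.sum_mul]
  rw [Finset.sum_comm]
  apply Finset.sum_congr rfl
  intro j _
  rw [Finset.sum_comm]
  apply Finset.sum_congr rfl
  intro l _
  apply Finset.sum_congr rfl
  intro i _
  ring

lemma S2_eq (P Q x : Matrix (Fin n) (Fin n) ℂ) (c d : ℂ) :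
    ∑ i, ∑ j, ∑ k, ∑ l, (c * P j i) * (d * Q l k) * (if l = i then x k j else 0)
      = c * d * Matrix.trace (P * Q * x) := by
  have h1 : ∀ (i j k : Fin n),
      ∑ l, (c * P j i) * (d * Q l k) * (if l = i then x k j else 0)
        = (c * P j i) * (d * Q i k) * x k j := by
    intro i j k
    simp [mul_ite, Finset.sum_ite_eq]
  simp only [h1]
  simp only [Matrix.trace, Matrix.diag_apply, Matrix.mul_apply, Finset.mul_sum,
    Finset.sum_mul]
  rw [Finset.sum_comm]
  apply Finset.sum_congr rfl
  intro j _
  rw [Finset.sum_comm]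
  apply Finset.sum_congr rfl
  intro k _
  apply Finset.sum_congr rfl
  intro i _
  ring

/-! ### The key trace identity -/

lemma trace_identity (hm : m ≤ n) (hm' : m' ≤ n) (x : Matrix (Fin n) (Fin n) ℂ) (a b : ℕ) :
    Matrix.trace (padE hm ((x.submatrix (Fin.castLE hm) (Fin.castLE hm)) ^ a) * x *
        padE hm' ((x.submatrix (Fin.castLE hm') (Fin.castLE hm')) ^ b))
      = Matrix.trace (padE hm ((x.submatrix (Fin.castLE hm) (Fin.castLE hm)) ^ a) *
          padE hm' ((x.submatrix (Fin.castLE hm') (Fin.castLE hm')) ^ b) * x) := by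
  rcases le_total m m' with hmm' | hmm'
  · -- `m ≤ m'` : work in the `m' × m'` frame
    set B := x.submatrix (Fin.castLE hm') (Fin.castLE hm') with hB
    have hA : x.submatrix (Fin.castLE hm) (Fin.castLE hm)
        = B.submatrix (Fin.castLE hmm') (Fin.castLE hmm') := rfl
    have hP : padE hm ((x.submatrix (Fin.castLE hm) (Fin.castLE hm)) ^ a)
        = padE hm' (padE hmm' ((x.submatrix (Fin.castLE hm) (Fin.castLE hm)) ^ a)) := by
      rw [padE_padE]
    set C := padE hmm' ((x.submatrix (Fin.castLE hm) (Fin.castLE hm)) ^ a) with hC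
    rw [hP, padE_mul_x_mul_padE, trace_padE, padE_mul, trace_padE_mul_x, ← hB]
    rw [mul_assoc, mul_assoc, pow_mul_comm']
  · -- `m' ≤ m` : work in the `m × m` frame
    set A := x.submatrix (Fin.castLE hm) (Fin.castLE hm) with hA
    have hQ : padE hm' ((x.submatrix (Fin.castLE hm') (Fin.castLE hm')) ^ b)
        = padE hm (padE hmm' ((x.submatrix (Fin.castLE hm') (Fin.castLE hm')) ^ b)) := by
      rw [padE_padE]
    set D := padE hmm' ((x.submatrix (Fin.castLE hm') (Fin.castLE hm')) ^ b) with hD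
    rw [hQ, padE_mul_x_mul_padE, trace_padE, padE_mul, trace_padE_mul_x, ← hA]
    rw [Matrix.trace_mul_comm (A ^ a * D) A, ← mul_assoc, pow_mul_comm']

end GZaux

/-- The Lie–Poisson bracket on `M(n,ℂ) ≅ 𝔤𝔩(n)^*` (via the trace form), written in
matrix-entry coordinates: `{f,g}(x) = ∑ ∂f/∂x_{ij} ∂g/∂x_{kl} (δ_{jk} x_{il} - δ_{li} x_{kj})`. -/
noncomputable def liePoissonBracket {n : ℕ}
    (f g : Matrix (Fin n) (Fin n) ℂ → ℂ) (x : Matrix (Fin n) (Fin n) ℂ) : ℂ :=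
  ∑ i, ∑ j, ∑ k, ∑ l,
    fderiv ℂ f x (Matrix.single i j (1 : ℂ)) *
      fderiv ℂ g x (Matrix.single k l (1 : ℂ)) *
      ((if j = k then x i l else 0) - (if l = i then x k j else 0))

/-- The Gelfand–Zeitlin functions `f_{m,k}(x) = tr((x_m)^k)` (traces
of powers of the upper-left `m×m` blocks) pairwise Poisson commute for the
Lie–Poisson structure on `M(n,ℂ)`. -/
theorem gelfandZeitlin_poisson_commute (n : ℕ)
    (m m' : ℕ) (hm : m ≤ n) (hm' : m' ≤ n) (k k' : ℕ)
    (x : Matrix (Fin n) (Fin n) ℂ) :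
    liePoissonBracket
      (fun y => Matrix.trace ((y.submatrix (Fin.castLE hm) (Fin.castLE hm)) ^ k))
      (fun y => Matrix.trace ((y.submatrix (Fin.castLE hm') (Fin.castLE hm')) ^ k'))
      x = 0 := by
  unfold liePoissonBracket
  simp only [fderiv_GZ hm x k, fderiv_GZ hm' x k']
  simp only [mul_sub, Finset.sum_sub_distrib]
  rw [S1_eq, S2_eq, trace_identity hm hm' x (k - 1) (k' - 1), sub_self]
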